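/- (Bäcklund transformation s₀ for Painlevé III′.) Let (q, p, H) solve the Painlevé III′ Hamiltonian system with parameters v1, v2 ∈ ℂ on an open set U ⊆ ℂ with 0 ∉ U, and assume q(s) ≠ 0 for all s ∈ U. Define p̃(s) := (q(s)/s)·( q(s)·(p(s) − 1) − (v1 − v2)/2 ) + 1 and q̃(s) := −s/q(s). Then (q̃, p̃) solves the Painlevé III′ Hamiltonian system with parameters (−1−v2, −1−v1) on U, and its Hamiltonian H̃ satisfies s·H̃(s) = s·H(s) − q(s)·(p(s) − 1) + ((v1 − v2)/2)·(1 + (v1 + v2)/2) for all s ∈ U. -/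

import Mathlib

open Complex

/-- `(q, p, H)` solves the Painlevé III′ Hamiltonian system with parameters
`v1, v2` on an open set `U ⊆ ℂ` with `0 ∉ U`. -/
def SolvesPIII' (v1 v2 : ℂ) (U : Set ℂ) (q p H : ℂ → ℂ) : Prop :=
  IsOpen U ∧ (0 : ℂ) ∉ U ∧
    DifferentiableOn ℂ q U ∧ DifferentiableOn ℂ p U ∧
    (∀ s ∈ U, s * H s =
      q s ^ 2 * p s ^ 2 - (q s ^ 2 + v1 * q s - s) * p s
        + (1 / 2) * (v1 + v2) * q s) ∧
    (∀ s ∈ U, s * deriv q s = 2 * q s ^ 2 * p s - q s ^ 2 - v1 * q s + s) ∧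
    (∀ s ∈ U, s * deriv p s =
      -2 * q s * p s ^ 2 + 2 * q s * p s + v1 * p s - (1 / 2) * (v1 + v2))

private lemma pIII_aux1 (s Q P dq v1 v2 : ℂ) (hsn : s ≠ 0) (hqn : Q ≠ 0)
    (e1 : s * dq = 2 * Q ^ 2 * P - Q ^ 2 - v1 * Q + s) :
    s * ((-1 * Q - (-s) * dq) / Q ^ 2) =
      2 * (-s / Q) ^ 2 * (Q / s * (Q * (P - 1) - (v1 - v2) / 2) + 1)
        - (-s / Q) ^ 2 - (-1 - v2) * (-s / Q) + s := by
  have hE : Q ^ 2 * (s * 2) * Q ^ 2 * Q ≠ 0 := by simp [hsn, hqn]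
  field_simp
  linear_combination e1

private lemma pIII_aux2 (s Q P dq dp v1 v2 : ℂ) (hsn : s ≠ 0) (hqn : Q ≠ 0)
    (e1 : s * dq = 2 * Q ^ 2 * P - Q ^ 2 - v1 * Q + s)
    (e2 : s * dp = -2 * Q * P ^ 2 + 2 * Q * P + v1 * P - (1 / 2) * (v1 + v2)) :
    s * ((dq * s - Q * 1) / s ^ 2 * (Q * (P - 1) - (v1 - v2) / 2)
        + Q / s * (dq * (P - 1) + Q * dp)) =
      -2 * (-s / Q) * (Q / s * (Q * (P - 1) - (v1 - v2) / 2) + 1) ^ 2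
        + 2 * (-s / Q) * (Q / s * (Q * (P - 1) - (v1 - v2) / 2) + 1)
        + (-1 - v2) * (Q / s * (Q * (P - 1) - (v1 - v2) / 2) + 1)
        - (1 / 2) * ((-1 - v2) + (-1 - v1)) := by
  have hE : Q * (s * 2) ^ 2 * (Q * (s * 2)) * (s * 2) ≠ 0 := by
    simp [hsn, hqn]
  field_simp
  linear_combination (Q * (v2 - v1)
    + 4 * Q ^ 2 * (P - 1)) * e1 + 2 * Q ^ 3 * e2

private lemma pIII_aux3 (s Q P v1 v2 : ℂ) (hsn : s ≠ 0) (hqn : Q ≠ 0) :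
    (-s / Q) ^ 2 * (Q / s * (Q * (P - 1) - (v1 - v2) / 2) + 1) ^ 2
      - ((-s / Q) ^ 2 + (-1 - v2) * (-s / Q) - s)
        * (Q / s * (Q * (P - 1) - (v1 - v2) / 2) + 1)
      + 1 / 2 * ((-1 - v2) + (-1 - v1)) * (-s / Q) =
    (Q ^ 2 * P ^ 2 - (Q ^ 2 + v1 * Q - s) * P + 1 / 2 * (v1 + v2) * Q)
      - Q * (P - 1) + ((v1 - v2) / 2) * (1 + (v1 + v2) / 2) := by
  have hE5 : Q ^ 2 * (s * 2) ^ 2 * (Q ^ 2 * Q * (s * 2)) ≠ 0 := by simp [hsn, hqn]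
  field_simp
  ring

/-- Bäcklund transformation `s₀` for Painlevé III′:
`p̃ = (q/s)(q(p−1) − (v1−v2)/2) + 1`, `q̃ = −s/q` solves the system with
parameters `(−1−v2, −1−v1)`, and
`s·H̃(s) = s·H(s) − q(p−1) + ((v1−v2)/2)(1 + (v1+v2)/2)`. -/
theorem painleveIIIprime_backlund_s0 (v1 v2 : ℂ) (U : Set ℂ)
    (q p H : ℂ → ℂ)
    (hsol : SolvesPIII' v1 v2 U q p H)
    (hq : ∀ s ∈ U, q s ≠ 0)
    (qt pt : ℂ → ℂ)
    (hpt : ∀ s ∈ U, pt s =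
      (q s / s) * (q s * (p s - 1) - (v1 - v2) / 2) + 1)
    (hqt : ∀ s ∈ U, qt s = -s / q s) :
    ∃ Ht : ℂ → ℂ,
      SolvesPIII' (-1 - v2) (-1 - v1) U qt pt Ht ∧
      ∀ s ∈ U, s * Ht s =
        s * H s - q s * (p s - 1) + ((v1 - v2) / 2) * (1 + (v1 + v2) / 2) := by
  obtain ⟨hU, h0, hdq, hdp, hHam, hq', hp'⟩ := hsol
  have hsne : ∀ s ∈ U, s ≠ 0 := fun s hs h => h0 (h ▸ hs)
  refine ⟨fun s => (qt s ^ 2 * pt s ^ 2 - (qt s ^ 2 + (-1 - v2) * qt s - s) * pt s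
      + (1 / 2) * ((-1 - v2) + (-1 - v1)) * qt s) / s, ⟨hU, h0, ?_, ?_, ?_, ?_, ?_⟩, ?_⟩
  · -- qt differentiable
    refine DifferentiableOn.congr (f := fun t => -t / q t) ?_ hqt
    exact (differentiableOn_id.neg).div hdq hq
  · -- pt differentiable
    refine DifferentiableOn.congr
      (f := fun t => (q t / t) * (q t * (p t - 1) - (v1 - v2) / 2) + 1) ?_ hpt
    exact (((hdq.div differentiableOn_id hsne).mul
      ((hdq.mul (hdp.sub (differentiableOn_const 1))).sub
        (differentiableOn_const _))).add (differentiableOn_const 1))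
  · -- Hamiltonian equation
    intro s hs
    rw [mul_div_cancel₀ _ (hsne s hs)]
  · -- qt ODE
    intro s hs
    have hsn := hsne s hs
    have hqn := hq s hs
    have hqd : HasDerivAt q (deriv q s) s :=
      ((hdq s hs).differentiableAt (hU.mem_nhds hs)).hasDerivAt
    have heq : qt =ᶠ[nhds s] fun t => -t / q t :=
      Filter.eventuallyEq_of_mem (hU.mem_nhds hs) hqt
    have hf : HasDerivAt (fun t => -t / q t)
        ((-1 * q s - (-s) * deriv q s) / q s ^ 2) s :=
      ((hasDerivAt_id s).neg).div hqd hqn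
    have hdqt : deriv qt s = (-1 * q s - (-s) * deriv q s) / q s ^ 2 := by
      rw [heq.deriv_eq, hf.deriv]
    rw [hdqt, hqt s hs, hpt s hs]
    exact pIII_aux1 s (q s) (p s) (deriv q s) v1 v2 hsn hqn (hq' s hs)
  · -- pt ODE
    intro s hs
    have hsn := hsne s hs
    have hqn := hq s hs
    have hqd : HasDerivAt q (deriv q s) s :=
      ((hdq s hs).differentiableAt (hU.mem_nhds hs)).hasDerivAt
    have hpd : HasDerivAt p (deriv p s) s :=
      ((hdp s hs).differentiableAt (hU.mem_nhds hs)).hasDerivAt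
    have heq : pt =ᶠ[nhds s]
        fun t => (q t / t) * (q t * (p t - 1) - (v1 - v2) / 2) + 1 :=
      Filter.eventuallyEq_of_mem (hU.mem_nhds hs) hpt
    have h1 : HasDerivAt (fun t => q t / t)
        ((deriv q s * s - q s * 1) / s ^ 2) s :=
      hqd.div (hasDerivAt_id s) hsn
    have h2 : HasDerivAt (fun t => q t * (p t - 1) - (v1 - v2) / 2)
        (deriv q s * (p s - 1) + q s * deriv p s) s := by
      simpa using (hqd.mul (hpd.sub_const 1)).sub_const ((v1 - v2) / 2)
    have hf : HasDerivAt
        (fun t => (q t / t) * (q t * (p t - 1) - (v1 - v2) / 2) + 1)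
        ((deriv q s * s - q s * 1) / s ^ 2 * (q s * (p s - 1) - (v1 - v2) / 2)
          + (q s / s) * (deriv q s * (p s - 1) + q s * deriv p s)) s :=
      (h1.mul h2).add_const 1
    have hdpt : deriv pt s = (deriv q s * s - q s * 1) / s ^ 2
        * (q s * (p s - 1) - (v1 - v2) / 2)
        + (q s / s) * (deriv q s * (p s - 1) + q s * deriv p s) := by
      rw [heq.deriv_eq, hf.deriv]
    rw [hdpt, hqt s hs, hpt s hs]
    exact pIII_aux2 s (q s) (p s) (deriv q s) (deriv p s) v1 v2 hsn hqn
      (hq' s hs) (hp' s hs)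
  · -- Hamiltonian relation
    intro s hs
    rw [mul_div_cancel₀ _ (hsne s hs), hqt s hs, hpt s hs, hHam s hs]
    exact pIII_aux3 s (q s) (p s) v1 v2 (hsne s hs) (hq s hs)
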